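/- Assume the weak regularity assumption: for every δ > 0 and every admissible direction s there exists T > 0 such that dist₁(ts, S) ≤ δt for all t > T. Fix α, β > 0 and let (S_N)_{N≥2} be subsets of ℝ^d with {x ∈ S : f(x) > α/N} ⊆ S_N ⊆ {x ∈ S : f(x) ≥ β/N} for every N. Then for every admissible direction s and every 0 ≤ r ≤ 1/(γ(s)·s), dist₁(rs, (1/log N)·S_N) → 0 as N → ∞. -/

import Mathlib

open Filter Topology Pointwise

set_option maxHeartbeats 1000000

/-- ℓ¹ dot product on `ℝ^d` (with the `ℓ¹` norm, modelled by `PiLp 1`). -/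
noncomputable def dotp {d : ℕ} (x y : PiLp 1 (fun _ : Fin d => ℝ)) : ℝ :=
  ∑ j, x j * y j

/-- A direction `s` on the unit `ℓ¹` sphere is admissible for `S` if some sequence of `S`
goes to infinity with normalized terms converging to `s`. -/
def Admissible {d : ℕ} (S : Set (PiLp 1 (fun _ : Fin d => ℝ)))
    (s : PiLp 1 (fun _ : Fin d => ℝ)) : Prop :=
  ‖s‖ = 1 ∧ ∃ y : ℕ → PiLp 1 (fun _ : Fin d => ℝ), (∀ n, y n ∈ S) ∧
    Filter.Tendsto (fun n => ‖y n‖) Filter.atTop Filter.atTop ∧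
    Filter.Tendsto (fun n => ‖y n‖⁻¹ • y n) Filter.atTop (nhds s)

lemma dotp_comm {d : ℕ} (x y : PiLp 1 (fun _ : Fin d => ℝ)) : dotp x y = dotp y x := by
  simp [dotp, mul_comm]

lemma dotp_smul_left {d : ℕ} (a : ℝ) (x y : PiLp 1 (fun _ : Fin d => ℝ)) :
    dotp (a • x) y = a * dotp x y := by
  simp [dotp, Finset.mul_sum, mul_assoc]

lemma contphi {d : ℕ} (γ : PiLp 1 (fun _ : Fin d => ℝ) → PiLp 1 (fun _ : Fin d => ℝ))
    (hγ : ContinuousOn γ {s : PiLp 1 (fun _ : Fin d => ℝ) | ‖s‖ = 1}) :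
    ContinuousOn (fun u => dotp (γ u) u) {s : PiLp 1 (fun _ : Fin d => ℝ) | ‖s‖ = 1} := by
  unfold dotp
  apply continuousOn_finset_sum
  intro j _
  exact ((PiLp.continuous_apply 1 _ j).comp_continuousOn hγ).mul (PiLp.continuous_apply 1 _ j).continuousOn
lemma sqrt_le_self' {x : ℝ} (hx : 1 ≤ x) : Real.sqrt x ≤ x := by
  calc Real.sqrt x ≤ Real.sqrt (x ^ 2) := Real.sqrt_le_sqrt (by nlinarith)
    _ = x := Real.sqrt_sq (by linarith)

lemma arith1 {δ a P : ℝ} (hδ : 0 ≤ δ) (h16 : 16 * δ ≤ a) (ha : 0 < a) (ha2 : a ≤ 1 / 2)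
    (hP : 0 ≤ P) (hPa : P ≤ 1 - a) : (1 + δ) * P * (1 + a / 8) ≤ 1 - a / 2 := by
  nlinarith [mul_nonneg hδ hP, sq_nonneg a, mul_nonneg (mul_nonneg hδ hP) ha.le]

/-- Under the weak regularity assumption, for every admissible direction `s` and every
`0 ≤ r ≤ 1/(γ(s)·s)`, the `ℓ¹` distance from `rs` to the rescaled sandpile
`(1/log N)·S_N` tends to `0`. -/
theorem stmt15 {d : ℕ} (hd : 1 ≤ d)
    (c : PiLp 1 (fun _ : Fin d => ℝ) → ℝ)
    (γ : PiLp 1 (fun _ : Fin d => ℝ) → PiLp 1 (fun _ : Fin d => ℝ))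
    (hc : ContinuousOn c {s : PiLp 1 (fun _ : Fin d => ℝ) | ‖s‖ = 1})
    (hγ : ContinuousOn γ {s : PiLp 1 (fun _ : Fin d => ℝ) | ‖s‖ = 1})
    (hcpos : ∀ s : PiLp 1 (fun _ : Fin d => ℝ), ‖s‖ = 1 → 0 < c s)
    (hγpos : ∀ s : PiLp 1 (fun _ : Fin d => ℝ), ‖s‖ = 1 → 0 < dotp (γ s) s)
    (f : PiLp 1 (fun _ : Fin d => ℝ) → ℝ)
    (hf : ∀ ε > (0 : ℝ), ∃ R > (0 : ℝ), ∀ z : PiLp 1 (fun _ : Fin d => ℝ), ‖z‖ > R →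
      |f z * (c (‖z‖⁻¹ • z))⁻¹ * Real.sqrt ‖z‖ *
        Real.exp (dotp z (γ (‖z‖⁻¹ • z))) - 1| ≤ ε)
    (S : Set (PiLp 1 (fun _ : Fin d => ℝ)))
    (hreg : ∀ δ > (0 : ℝ), ∀ s, Admissible S s → ∃ T > (0 : ℝ), ∀ t > T,
      Metric.infDist (t • s) S ≤ δ * t)
    (α β : ℝ) (hα : 0 < α) (hβ : 0 < β)
    (SN : ℕ → Set (PiLp 1 (fun _ : Fin d => ℝ)))
    (hSN : ∀ N : ℕ, 2 ≤ N →
      {x ∈ S | f x > α / N} ⊆ SN N ∧ SN N ⊆ {x ∈ S | f x ≥ β / N}) :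
    ∀ s, Admissible S s → ∀ r : ℝ, 0 ≤ r → r ≤ 1 / dotp (γ s) s →
      Tendsto (fun N : ℕ => Metric.infDist (r • s) ((Real.log N)⁻¹ • SN N))
        atTop (nhds 0) := by
  intro s hs r hr0 hr1
  have hSne : S.Nonempty := by
    obtain ⟨yseq, hyseq, -, -⟩ := hs.2
    exact ⟨yseq 0, hyseq 0⟩
  set g := dotp (γ s) s with hgdef
  have hg : 0 < g := hγpos s hs.1
  have hcs : 0 < c s := hcpos s hs.1
  rw [Metric.tendsto_nhds]
  intro ε hε
  -- small constants
  set η := min (ε / 4) (1 / (2 * g)) with hηdef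
  have hη : 0 < η := lt_min (by linarith) (by positivity)
  have hηε : η ≤ ε / 4 := min_le_left _ _
  have hηg : η * g ≤ 1 / 2 := by
    have h := min_le_right (ε / 4) (1 / (2 * g))
    have h2 : η * g ≤ (1 / (2 * g)) * g := mul_le_mul_of_nonneg_right h hg.le
    have h3 : (1 / (2 * g)) * g = 1 / 2 := by field_simp
    linarith
  set κ := η * g / 2 with hκdef
  have hκ : 0 < κ := by positivity
  -- continuity of u ↦ dotp (γ u) u at s
  have hφ := (contphi γ hγ).continuousWithinAt (show s ∈ {u : PiLp 1 (fun _ : Fin d => ℝ) | ‖u‖ = 1} from hs.1)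
  rw [Metric.continuousWithinAt_iff] at hφ
  obtain ⟨δ₁, hδ₁pos, hδ₁⟩ := hφ (η * g ^ 2 / 8) (by positivity)
  have hcc := hc.continuousWithinAt (show s ∈ {u : PiLp 1 (fun _ : Fin d => ℝ) | ‖u‖ = 1} from hs.1)
  rw [Metric.continuousWithinAt_iff] at hcc
  obtain ⟨δ₂, hδ₂pos, hδ₂⟩ := hcc (c s / 2) (by positivity)
  -- δ
  set m := min (min δ₁ δ₂) (min (η * g / 4) (min (ε * g / 4) 1)) with hmdef
  have hm : 0 < m := by
    refine lt_min (lt_min hδ₁pos hδ₂pos) (lt_min (by positivity) (lt_min (by positivity) one_pos))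
  set δ := m / 4 with hδdef
  have hδpos : 0 < δ := by positivity
  have hmδ₁ : m ≤ δ₁ := by
    rw [hmdef]; exact le_trans (min_le_left _ _) (min_le_left _ _)
  have hmδ₂ : m ≤ δ₂ := by
    rw [hmdef]; exact le_trans (min_le_left _ _) (min_le_right _ _)
  have hmηg : m ≤ η * g / 4 := by
    rw [hmdef]; exact le_trans (min_le_right _ _) (min_le_left _ _)
  have hmεg : m ≤ ε * g / 4 := by
    rw [hmdef]; exact le_trans (min_le_right _ _) (le_trans (min_le_right _ _) (min_le_left _ _))
  have hm1 : m ≤ 1 := by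
    rw [hmdef]; exact le_trans (min_le_right _ _) (le_trans (min_le_right _ _) (min_le_right _ _))
  have hδ1 : 4 * δ ≤ δ₁ := by rw [hδdef]; linarith
  have hδ2 : 4 * δ ≤ δ₂ := by rw [hδdef]; linarith
  have hδηg : 16 * δ ≤ η * g := by rw [hδdef]; linarith
  have hδεg : 16 * δ ≤ ε * g := by rw [hδdef]; linarith
  have hδ4 : 4 * δ ≤ 1 := by rw [hδdef]; linarith
  -- regularity and asymptotics
  obtain ⟨T, hT, hTs⟩ := hreg (δ / 2) (by positivity) s hs
  obtain ⟨R₁, hR₁, hfR⟩ := hf (1 / 2) one_half_pos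
  -- ρ
  set ρ := max η (r - η) with hρdef
  have hρη : η ≤ ρ := le_max_left _ _
  have hρpos : 0 < ρ := lt_of_lt_of_le hη hρη
  have hρr₁ : ρ - r ≤ η := by
    rcases max_cases η (r - η) with ⟨h1, h2⟩ | ⟨h1, h2⟩ <;> rw [hρdef, h1] <;> linarith
  have hρr₂ : r - ρ ≤ η := by
    have := le_max_right η (r - η); linarith
  have hρg : ρ * g ≤ 1 - η * g := by
    have h1 : η * g ≤ 1 - η * g := by linarith
    have h2 : (r - η) * g ≤ 1 - η * g := by
      have h3 : r * g ≤ 1 := (le_div_iff₀ hg).1 hr1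
      have h4 : (r - η) * g = r * g - η * g := by ring
      linarith
    rcases max_cases η (r - η) with ⟨h, -⟩ | ⟨h, -⟩ <;> rw [hρdef, h]
    · exact h1
    · exact h2
  have hρle : ρ * g ≤ 1 := by
    have := mul_nonneg hη.le hg.le; linarith
  -- the eventual conditions
  have hLinf : Tendsto (fun N : ℕ => Real.log N) atTop atTop :=
    Real.tendsto_log_atTop.comp tendsto_natCast_atTop_atTop
  filter_upwards [eventually_ge_atTop 2, hLinf.eventually (eventually_gt_atTop (T / η)),
    hLinf.eventually (eventually_gt_atTop (2 * R₁ / η)),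
    hLinf.eventually (eventually_ge_atTop (g / 2)),
    hLinf.eventually (eventually_gt_atTop (32 * α / (c s * κ ^ 2 * g))),
    hLinf.eventually (eventually_gt_atTop 0)] with N hN2 hNT hNR hNg hNα hL0
  set L := Real.log N with hLdef
  have hNpos : (0 : ℝ) < N := by positivity
  set t := ρ * L with htdef
  have ht0 : 0 < t := by positivity
  have htT : T < t := by
    have h1 : T < η * L := by
      rw [div_lt_iff₀ hη] at hNT
      linarith [hNT]
    have h2 : η * L ≤ ρ * L := mul_le_mul_of_nonneg_right hρη hL0.le
    rw [htdef]; linarith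
  -- a point of S near t • s
  have h2 : Metric.infDist (t • s) S < δ * t := by
    have h1 := hTs t htT
    linarith [mul_pos hδpos ht0]
  obtain ⟨y, hyS, hyd⟩ := (Metric.infDist_lt_iff hSne).1 h2
  rw [dist_eq_norm] at hyd
  have hnts : ‖t • s‖ = t := by
    rw [norm_smul, hs.1, mul_one, Real.norm_eq_abs, abs_of_pos ht0]
  have hyl : |‖y‖ - t| ≤ δ * t := by
    have h := abs_norm_sub_norm_le y (t • s)
    rw [hnts] at h
    have : ‖y - t • s‖ = ‖t • s - y‖ := by rw [norm_sub_rev]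
    linarith [this ▸ h, le_of_lt hyd]
  have hy_lb : (1 - δ) * t ≤ ‖y‖ := by
    have := (abs_le.1 hyl).1; linarith
  have hy_ub : ‖y‖ ≤ (1 + δ) * t := by
    have := (abs_le.1 hyl).2; linarith
  have hy0 : 0 < ‖y‖ := by
    have h1 := mul_le_mul_of_nonneg_right hδ4 ht0.le
    have h2 : (1 - δ) * t = t - δ * t := by ring
    linarith
  set w := ‖y‖⁻¹ • y with hwdef
  have hw1 : ‖w‖ = 1 := by
    rw [hwdef, norm_smul, Real.norm_eq_abs, abs_of_pos (inv_pos.2 hy0),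
      inv_mul_cancel₀ (ne_of_gt hy0)]
  have hws : ‖w - s‖ ≤ 3 * δ := by
    have hkey : w - s = ‖y‖⁻¹ • (y - ‖y‖ • s) := by
      rw [smul_sub, smul_smul, inv_mul_cancel₀ (ne_of_gt hy0), one_smul, hwdef]
    have h1 : ‖y - ‖y‖ • s‖ ≤ 2 * (δ * t) := by
      have hsum : ‖y - ‖y‖ • s‖ ≤ ‖y - t • s‖ + ‖t • s - ‖y‖ • s‖ := by
        calc ‖y - ‖y‖ • s‖ = ‖(y - t • s) + (t • s - ‖y‖ • s)‖ := by congr 1; abel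
          _ ≤ ‖y - t • s‖ + ‖t • s - ‖y‖ • s‖ := norm_add_le _ _
      have h2 : ‖t • s - ‖y‖ • s‖ = |t - ‖y‖| := by
        rw [← sub_smul, norm_smul, hs.1, mul_one, Real.norm_eq_abs]
      have h3 : |t - ‖y‖| ≤ δ * t := by rw [abs_sub_comm]; exact hyl
      have h0 : ‖y - t • s‖ = ‖t • s - y‖ := norm_sub_rev _ _
      rw [h2] at hsum
      rw [h0] at hsum
      linarith
    calc ‖w - s‖ = ‖y‖⁻¹ * ‖y - ‖y‖ • s‖ := by
          rw [hkey, norm_smul, Real.norm_eq_abs, abs_of_pos (inv_pos.2 hy0)]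
      _ ≤ 3 * δ := by
          rw [inv_mul_le_iff₀ hy0]
          have e1 := mul_le_mul_of_nonneg_left hy_lb hδpos.le
          have e2 := mul_le_mul_of_nonneg_right hδ4 (mul_pos hδpos ht0).le
          have e3 : δ * ((1 - δ) * t) = δ * t - δ * δ * t := by ring
          have e4 : ‖y‖ * (3 * δ) = 3 * (δ * ‖y‖) := by ring
          rw [e4]
          linarith [mul_pos hδpos ht0]
  have hwd : dist w s < min δ₁ δ₂ := by
    rw [dist_eq_norm]
    have : 3 * δ < min δ₁ δ₂ := by
      rcases min_cases δ₁ δ₂ with ⟨h, -⟩ | ⟨h, -⟩ <;> rw [h] <;> linarith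
    linarith
  have hφw : dotp (γ w) w < g + η * g ^ 2 / 8 := by
    have := hδ₁ hw1 (lt_of_lt_of_le hwd (min_le_left _ _))
    rw [Real.dist_eq] at this
    have := (abs_lt.1 this).2
    linarith
  have hcw : c s / 2 < c w := by
    have := hδ₂ hw1 (lt_of_lt_of_le hwd (min_le_right _ _))
    rw [Real.dist_eq] at this
    have := (abs_lt.1 this).1
    linarith
  -- exponent bound
  have hD : dotp y (γ w) ≤ (1 - κ) * L := by
    have hyw : y = ‖y‖ • w := by
      rw [hwdef, smul_smul, mul_inv_cancel₀ (ne_of_gt hy0), one_smul]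
    have h1 : dotp y (γ w) = ‖y‖ * dotp (γ w) w := by
      conv_lhs => rw [hyw]
      rw [dotp_smul_left, dotp_comm]
    rw [h1]
    have h2 : ‖y‖ * dotp (γ w) w ≤ ‖y‖ * (g + η * g ^ 2 / 8) :=
      mul_le_mul_of_nonneg_left (le_of_lt hφw) (le_of_lt hy0)
    have h3 : ‖y‖ * (g + η * g ^ 2 / 8) ≤ (1 + δ) * t * (g + η * g ^ 2 / 8) :=
      mul_le_mul_of_nonneg_right hy_ub (by positivity)
    have h4 : (1 + δ) * (ρ * g) * (1 + η * g / 8) ≤ 1 - κ := by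
      rw [hκdef]
      have := arith1 hδpos.le hδηg (mul_pos hη hg) hηg (mul_pos hρpos hg).le hρg
      linarith
    have h5 : (1 + δ) * t * (g + η * g ^ 2 / 8) = ((1 + δ) * (ρ * g) * (1 + η * g / 8)) * L := by
      rw [htdef]; ring
    have hL0' : (0:ℝ) ≤ L := le_of_lt hL0
    have h6 := mul_le_mul_of_nonneg_right h4 hL0'
    linarith
  -- f lower bound from hf
  have hyR : R₁ < ‖y‖ := by
    rw [div_lt_iff₀ hη] at hNR
    have e1 := mul_le_mul_of_nonneg_right hδ4 ht0.le
    have e2 : η * L ≤ t := by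
      rw [htdef]; exact mul_le_mul_of_nonneg_right hρη hL0.le
    have e3 : (1 - δ) * t = t - δ * t := by ring
    linarith [hR₁]
  have hfy := hfR y hyR
  rw [← hwdef] at hfy
  have hexp : (0:ℝ) < Real.exp (dotp y (γ w)) := Real.exp_pos _
  have hsy : (0:ℝ) < Real.sqrt ‖y‖ := Real.sqrt_pos.2 hy0
  have hcw0 : (0:ℝ) < c w := by linarith
  have hhalf : (1:ℝ)/2 ≤ f y * (c w)⁻¹ * Real.sqrt ‖y‖ * Real.exp (dotp y (γ w)) := by
    have := (abs_le.1 hfy).1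
    linarith
  -- the key quantitative inequality
  have hkeyineq : α * Real.sqrt ‖y‖ < (1/2) * c w * Real.exp (- dotp y (γ w)) * N := by
    have hNL : (N : ℝ) = Real.exp L := (Real.exp_log hNpos).symm
    have hsqy : Real.sqrt ‖y‖ ≤ Real.sqrt (2 * L / g) := by
      apply Real.sqrt_le_sqrt
      have : ‖y‖ ≤ (1 + δ) * (ρ * L) := by rw [← htdef]; exact hy_ub
      have hρinv : ρ ≤ 1 / g := (le_div_iff₀ hg).2 hρle
      have h5 : (1 + δ) * ρ ≤ 2 * (1 / g) := by
        have e1 := mul_le_mul_of_nonneg_right hδ4 hρpos.le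
        have e2 : (0:ℝ) ≤ 1 / g := by positivity
        have e3 : (1 + δ) * ρ = ρ + δ * ρ := by ring
        linarith
      have h6 := mul_le_mul_of_nonneg_right h5 hL0.le
      have h7 : 2 * (1 / g) * L = 2 * L / g := by ring
      have h8 : (1 + δ) * (ρ * L) = (1 + δ) * ρ * L := by ring
      linarith
    have hx1 : (1:ℝ) ≤ 2 * L / g := by
      rw [le_div_iff₀ hg]; linarith
    have hsqx : Real.sqrt (2 * L / g) ≤ 2 * L / g := sqrt_le_self' hx1
    have hexpk : κ ^ 2 * L ^ 2 / 4 ≤ Real.exp (κ * L) := by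
      have h1 : Real.exp (κ * L) = Real.exp (κ * L / 2) * Real.exp (κ * L / 2) := by
        rw [← Real.exp_add]; ring_nf
      have h2 : κ * L / 2 ≤ Real.exp (κ * L / 2) := by
        have := Real.add_one_le_exp (κ * L / 2); linarith
      have h3 : 0 ≤ κ * L / 2 := by positivity
      have h4 := mul_self_le_mul_self h3 h2
      have h5 : κ * L / 2 * (κ * L / 2) = κ ^ 2 * L ^ 2 / 4 := by ring
      linarith
    have hmain : α * Real.sqrt (2 * L / g) < (c s / 4) * Real.exp (κ * L) := by
      have h6 : 32 * α / (c s * κ ^ 2 * g) < L := hNα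
      have h7 : 32 * α < c s * κ ^ 2 * g * L := by
        rw [div_lt_iff₀ (by positivity)] at h6; linarith
      have h8 : α * (2 * L / g) < (c s / 4) * (κ ^ 2 * L ^ 2 / 4) := by
        have e : α * (2 * L / g) = 2 * α * L / g := by ring
        rw [e, div_lt_iff₀ hg]
        linarith [mul_pos (sub_pos.2 h7) hL0]
      calc α * Real.sqrt (2 * L / g) ≤ α * (2 * L / g) :=
            mul_le_mul_of_nonneg_left hsqx hα.le
        _ < (c s / 4) * (κ ^ 2 * L ^ 2 / 4) := h8
        _ ≤ (c s / 4) * Real.exp (κ * L) :=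
            mul_le_mul_of_nonneg_left hexpk (by positivity)
    have hexpLD : (c s / 4) * Real.exp (κ * L) ≤ (1/2) * c w * Real.exp (L - dotp y (γ w)) := by
      have h9 : κ * L ≤ L - dotp y (γ w) := by
        have : (1 - κ) * L = L - κ * L := by ring
        linarith [hD]
      have h10 : Real.exp (κ * L) ≤ Real.exp (L - dotp y (γ w)) := Real.exp_le_exp.2 h9
      have e1 := mul_le_mul_of_nonneg_left h10 (by positivity : (0:ℝ) ≤ c s / 4)
      have e2 := mul_le_mul_of_nonneg_right hcw.le (Real.exp_pos (L - dotp y (γ w))).le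
      have e3 : c s / 2 * Real.exp (L - dotp y (γ w)) =
          (c s / 4) * Real.exp (L - dotp y (γ w)) * 2 := by ring
      have e4 : c w * Real.exp (L - dotp y (γ w)) =
          2 * ((1/2) * c w * Real.exp (L - dotp y (γ w))) := by ring
      linarith
    have h11 : (1/2) * c w * Real.exp (L - dotp y (γ w)) =
        (1/2) * c w * Real.exp (- dotp y (γ w)) * N := by
      have hEE : Real.exp (L - dotp y (γ w)) = Real.exp (- dotp y (γ w)) * Real.exp L := by
        rw [← Real.exp_add]; ring_nf
      rw [hNL, hEE]; ring
    calc α * Real.sqrt ‖y‖ ≤ α * Real.sqrt (2 * L / g) :=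
          mul_le_mul_of_nonneg_left hsqy hα.le
      _ < (c s / 4) * Real.exp (κ * L) := hmain
      _ ≤ (1/2) * c w * Real.exp (L - dotp y (γ w)) := hexpLD
      _ = _ := h11
  -- conclude f y > α / N
  have hfval : α / N < f y := by
    rw [div_lt_iff₀ hNpos]
    have hP : (0:ℝ) < (c w)⁻¹ * Real.sqrt ‖y‖ * Real.exp (dotp y (γ w)) := by positivity
    have hfy_lb : (1/2) * c w * Real.exp (- dotp y (γ w)) / Real.sqrt ‖y‖ ≤ f y := by
      rw [div_le_iff₀ hsy]
      have expand : f y * Real.sqrt ‖y‖ * ((c w)⁻¹ * Real.exp (dotp y (γ w))) =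
          f y * (c w)⁻¹ * Real.sqrt ‖y‖ * Real.exp (dotp y (γ w)) := by ring
      have h12 : (1:ℝ)/2 ≤ f y * Real.sqrt ‖y‖ * ((c w)⁻¹ * Real.exp (dotp y (γ w))) := by
        rw [expand]; exact hhalf
      have h13 : (1/2) * (c w * Real.exp (- dotp y (γ w))) ≤
          f y * Real.sqrt ‖y‖ * ((c w)⁻¹ * Real.exp (dotp y (γ w))) *
          (c w * Real.exp (- dotp y (γ w))) := by
        have hpos : (0:ℝ) < c w * Real.exp (- dotp y (γ w)) := by positivity
        exact mul_le_mul_of_nonneg_right h12 hpos.le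
      have h14 : f y * Real.sqrt ‖y‖ * ((c w)⁻¹ * Real.exp (dotp y (γ w))) *
          (c w * Real.exp (- dotp y (γ w))) = f y * Real.sqrt ‖y‖ := by
        rw [Real.exp_neg]
        field_simp
      linarith [h14 ▸ h13]
    have h15 : α < (1/2) * c w * Real.exp (- dotp y (γ w)) / Real.sqrt ‖y‖ * N := by
      rw [div_mul_eq_mul_div, lt_div_iff₀ hsy]
      linarith [hkeyineq]
    linarith [mul_le_mul_of_nonneg_right hfy_lb hNpos.le]
  -- membership and final distance bound
  have hy_in : y ∈ SN N := (hSN N hN2).1 ⟨hyS, hfval⟩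
  have hmem : L⁻¹ • y ∈ L⁻¹ • SN N := Set.smul_mem_smul_set hy_in
  have hd1 : Metric.infDist (r • s) (L⁻¹ • SN N) ≤ dist (r • s) (L⁻¹ • y) :=
    Metric.infDist_le_dist_of_mem hmem
  have hd2 : dist (r • s) (L⁻¹ • y) < ε := by
    rw [dist_eq_norm]
    have heq : r • s - L⁻¹ • y = L⁻¹ • ((L * r) • s - y) := by
      rw [smul_sub, smul_smul]
      congr 2
      field_simp
    rw [heq, norm_smul, Real.norm_eq_abs, abs_of_pos (inv_pos.2 hL0)]
    have h16 : ‖(L * r) • s - y‖ ≤ ‖(L * r) • s - t • s‖ + ‖t • s - y‖ := by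
      calc ‖(L * r) • s - y‖ = ‖((L * r) • s - t • s) + (t • s - y)‖ := by
            rw [sub_add_sub_cancel]
        _ ≤ _ := norm_add_le _ _
    have h17 : ‖(L * r) • s - t • s‖ = |L * r - t| := by
      rw [← sub_smul, norm_smul, hs.1, mul_one, Real.norm_eq_abs]
    have h18 : |L * r - t| ≤ η * L := by
      rw [htdef, abs_le]
      have e1 := mul_le_mul_of_nonneg_left hρr₁ hL0.le
      have e2 := mul_le_mul_of_nonneg_left hρr₂ hL0.le
      have e3 : L * (ρ - r) = ρ * L - L * r := by ring
      have e4 : L * (r - ρ) = L * r - ρ * L := by ring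
      constructor <;> linarith
    have h19 : ‖(L * r) • s - y‖ ≤ η * L + δ * t := by
      rw [h17] at h16; linarith
    have h20 : L⁻¹ * ‖(L * r) • s - y‖ ≤ η + δ * ρ := by
      rw [inv_mul_le_iff₀ hL0]
      have hdt : δ * t = δ * ρ * L := by rw [htdef]; ring
      have e : L * (η + δ * ρ) = η * L + δ * ρ * L := by ring
      linarith
    have h21 : δ * ρ ≤ ε / 16 := by
      have ha := mul_le_mul_of_nonneg_left hρle hδpos.le
      have hb : g * (δ * ρ) ≤ g * (ε / 16) := by
        have hc : δ * (ρ * g) = g * (δ * ρ) := by ring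
        have hd : g * (ε / 16) = ε * g / 16 := by ring
        linarith
      exact le_of_mul_le_mul_left hb hg
    linarith
  rw [Real.dist_eq, sub_zero, abs_of_nonneg Metric.infDist_nonneg]
  calc Metric.infDist (r • s) (L⁻¹ • SN N) ≤ dist (r • s) (L⁻¹ • y) := hd1
    _ < ε := hd2
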